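/- For every delta in (0, 1/2] and every real xi with 1/3 <= |xi| <= pi, the inequality (1-delta)/|1 - delta*e^{i*xi}| <= 1 - delta/20 holds. -/

import Mathlib

/-- For every `δ ∈ (0, 1/2]` and every real `ξ` with `1/3 ≤ |ξ| ≤ π`,
`(1-δ)/|1 - δ e^{iξ}| ≤ 1 - δ/20`. -/
theorem deletion_fourier_decay (δ : ℝ) (h0 : 0 < δ) (h1 : δ ≤ 1/2)
    (ξ : ℝ) (hl : 1/3 ≤ |ξ|) (hu : |ξ| ≤ Real.pi) :
    (1 - δ) / ‖(1 - (δ : ℂ) * Complex.exp (Complex.I * (ξ : ℂ)))‖ ≤ 1 - δ/20 := by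
  set A := ‖(1 - (δ : ℂ) * Complex.exp (Complex.I * (ξ : ℂ)))‖ with hA
  -- cos ξ bound
  have hc3 : Real.cos (1/3) ≤ 94509 / 100000 := by
    have := Real.cos_bound (x := 1/3) (by norm_num [abs_of_nonneg])
    rw [abs_le] at this
    rw [abs_of_nonneg (by norm_num : (0:ℝ) ≤ 1/3)] at this
    nlinarith [this.2]
  have hcos : Real.cos ξ ≤ 94509 / 100000 := by
    calc Real.cos ξ = Real.cos |ξ| := (Real.cos_abs ξ).symm
    _ ≤ Real.cos (1/3) :=
      Real.cos_le_cos_of_nonneg_of_le_pi (by norm_num) hu hl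
    _ ≤ _ := hc3
  -- A² = 1 - 2δ cos ξ + δ²
  have hA2 : A ^ 2 = 1 - 2 * δ * Real.cos ξ + δ ^ 2 := by
    rw [hA, Complex.sq_norm, mul_comm Complex.I, Complex.exp_mul_I, Complex.normSq_apply]
    simp [Complex.add_re, Complex.add_im, Complex.mul_re, Complex.mul_im,
      Complex.cos_ofReal_re, Complex.sin_ofReal_re]
    nlinarith [Real.sin_sq_add_cos_sq ξ]
  have hApos : 0 < A := by
    have h2 : (0:ℝ) < A ^ 2 := by
      rw [hA2]; nlinarith [Real.neg_one_le_cos ξ, Real.cos_le_one ξ]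
    have hA0 : 0 ≤ A := norm_nonneg _
    nlinarith
  rw [div_le_iff₀ hApos]
  have hsq : (1 - δ) ^ 2 ≤ ((1 - δ/20) * A) ^ 2 := by
    rw [mul_pow, hA2]
    nlinarith [sq_nonneg δ, mul_nonneg h0.le (sub_nonneg.2 h1), sq_nonneg (δ * (1/2 - δ))]
  have h1' : 0 ≤ 1 - δ := by linarith
  have h2' : 0 ≤ (1 - δ/20) * A := mul_nonneg (by linarith) hApos.le
  nlinarith [hsq]
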